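/- Propagated EP error signal: under the hypotheses of the previous statement, with s_β the nudged equilibria of Ẽ under constant nudging δ, the error signal δu := d/dβ [∇₃Ẽ(s_β, θ, u, ω)]|_{β=0} equals ∇²_{1,3}Ẽ(s⋆, θ, u, ω) · λ, where λ = −H⁻¹δ. That is, δu = −∇²_{1,3}Ẽ(s⋆, θ, u, ω) · (∇₁²Ẽ(s⋆, θ, u, ω))⁻¹ · δ. -/

import Mathlib

open scoped RealInnerProductSpace

noncomputable section

abbrev Euc (n : ℕ) := EuclideanSpace ℝ (Fin n)

open ContinuousLinearMap in
noncomputable def dInv (k : ℕ) : StrongDual ℝ (Euc k) →L[ℝ] Euc k :=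
  (InnerProductSpace.toDual ℝ (Euc k)).symm.toContinuousLinearEquiv.toContinuousLinearMap

lemma inner_dInv (k : ℕ) (A : StrongDual ℝ (Euc k)) (w : Euc k) :
    ⟪dInv k A, w⟫ = A w := InnerProductSpace.toDual_symm_apply

noncomputable def kR (a b : ℕ) : ((Euc a × Euc b) →L[ℝ] ℝ) →L[ℝ] Euc b :=
  (dInv b).comp ((ContinuousLinearMap.compL ℝ (Euc b) (Euc a × Euc b) ℝ).flip
    (ContinuousLinearMap.inr ℝ (Euc a) (Euc b)))

noncomputable def kL (a b : ℕ) : ((Euc a × Euc b) →L[ℝ] ℝ) →L[ℝ] Euc a :=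
  (dInv a).comp ((ContinuousLinearMap.compL ℝ (Euc a) (Euc a × Euc b) ℝ).flip
    (ContinuousLinearMap.inl ℝ (Euc a) (Euc b)))

lemma kR_apply (a b : ℕ) (A : (Euc a × Euc b) →L[ℝ] ℝ) :
    kR a b A = dInv b (A.comp (ContinuousLinearMap.inr ℝ (Euc a) (Euc b))) := rfl

lemma kL_apply (a b : ℕ) (A : (Euc a × Euc b) →L[ℝ] ℝ) :
    kL a b A = dInv a (A.comp (ContinuousLinearMap.inl ℝ (Euc a) (Euc b))) := rfl

lemma inner_kR (a b : ℕ) (A : (Euc a × Euc b) →L[ℝ] ℝ) (w : Euc b) :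
    ⟪kR a b A, w⟫ = A (0, w) := by
  rw [kR_apply, inner_dInv]; simp

lemma inner_kL (a b : ℕ) (A : (Euc a × Euc b) →L[ℝ] ℝ) (v : Euc a) :
    ⟪kL a b A, v⟫ = A (v, 0) := by
  rw [kL_apply, inner_dInv]; simp

lemma grad_eq {k : ℕ} (f : Euc k → ℝ) (x : Euc k) :
    gradient f x = dInv k (fderiv ℝ f x) := rfl

set_option maxHeartbeats 1000000 in
theorem stmt_13 {n p m q : ℕ}
    (Et : Euc n → Euc p → Euc m → Euc q → ℝ)
    (hEt : ContDiff ℝ 2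
      (fun t : Euc n × Euc p × Euc m × Euc q => Et t.1 t.2.1 t.2.2.1 t.2.2.2))
    (θ : Euc p) (u : Euc m) (ω : Euc q) (sstar : Euc n)
    (hcrit : gradient (fun s' => Et s' θ u ω) sstar = 0)
    (H Hinv : Euc n →L[ℝ] Euc n)
    (hH : H = fderiv ℝ (fun s' => gradient (fun s'' => Et s'' θ u ω) s') sstar)
    (h1 : Hinv.comp H = ContinuousLinearMap.id ℝ (Euc n))
    (h2 : H.comp Hinv = ContinuousLinearMap.id ℝ (Euc n))
    (δ : Euc n) (s : ℝ → Euc n) (hs : DifferentiableAt ℝ s 0) (hs0 : s 0 = sstar)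
    (ε : ℝ) (hε : 0 < ε)
    (hnudge : ∀ β ∈ Set.Ioo (-ε) ε,
      β • δ + gradient (fun s' => Et s' θ u ω) (s β) = 0)
    (lam : Euc n) (hlam : H lam + δ = 0) :
    deriv (fun β => gradient (fun u' => Et (s β) θ u' ω) u) 0 =
      (ContinuousLinearMap.adjoint
        (fderiv ℝ (fun u' => gradient (fun s' => Et s' θ u' ω) sstar) u)) lam ∧
    deriv (fun β => gradient (fun u' => Et (s β) θ u' ω) u) 0 =
      -((ContinuousLinearMap.adjoint
        (fderiv ℝ (fun u' => gradient (fun s' => Et s' θ u' ω) sstar) u)) (Hinv δ)) := by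
  classical
  -- the two-variable function
  set f : Euc n × Euc m → ℝ := fun x => Et x.1 θ x.2 ω with hf_def
  have hf : ContDiff ℝ 2 f := by
    have hlin : ContDiff ℝ 2 (fun x : Euc n × Euc m =>
        (x.1, θ, x.2, ω) : Euc n × Euc m → Euc n × Euc p × Euc m × Euc q) :=
      contDiff_fst.prodMk (contDiff_const.prodMk (contDiff_snd.prodMk contDiff_const))
    exact hEt.comp hlin
  set F : Euc n × Euc m → (Euc n × Euc m) →L[ℝ] ℝ := fderiv ℝ f with hF_def
  have hF : ContDiff ℝ 1 F := hf.fderiv_right (by norm_num)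
  have hfd : Differentiable ℝ f := hf.differentiable (by norm_num)
  -- partial derivative facts
  have hpartR : ∀ (s' : Euc n) (u' : Euc m),
      HasFDerivAt (fun u'' => f (s', u''))
        ((F (s', u')).comp (ContinuousLinearMap.inr ℝ (Euc n) (Euc m))) u' := fun s' u' =>
    ((hfd (s', u')).hasFDerivAt).comp u' (hasFDerivAt_prodMk_right s' u')
  have hpartL : ∀ (s' : Euc n) (u' : Euc m),
      HasFDerivAt (fun s'' => f (s'', u'))
        ((F (s', u')).comp (ContinuousLinearMap.inl ℝ (Euc n) (Euc m))) s' := fun s' u' =>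
    ((hfd (s', u')).hasFDerivAt).comp s' (f := fun s'' => (s'', u')) (hasFDerivAt_prodMk_left s' u')
  -- rewrite the gradient maps in terms of kR/kL/F
  have hg : (fun s' => gradient (fun u' => Et s' θ u' ω) u) =
      fun s' => kR n m (F (s', u)) := by
    funext s'
    rw [show (fun u' => Et s' θ u' ω) = fun u'' => f (s', u'') from rfl, grad_eq,
      (hpartR s' u).fderiv, kR_apply]
  have hh : (fun u' => gradient (fun s' => Et s' θ u' ω) sstar) =
      fun u' => kL n m (F (sstar, u')) := by
    funext u'
    rw [show (fun s' => Et s' θ u' ω) = fun s'' => f (s'', u') from rfl, grad_eq,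
      (hpartL sstar u').fderiv, kL_apply]
  have hG : (fun s' => gradient (fun s'' => Et s'' θ u ω) s') =
      fun s' => kL n m (F (s', u)) := by
    funext s'
    rw [show (fun s'' => Et s'' θ u ω) = fun s'' => f (s'', u) from rfl, grad_eq,
      (hpartL s' u).fderiv, kL_apply]
  -- second derivative
  set Φ : (Euc n × Euc m) →L[ℝ] (Euc n × Euc m) →L[ℝ] ℝ := fderiv ℝ F (sstar, u) with hΦ_def
  have hFd : HasFDerivAt F Φ (sstar, u) :=
    ((hF.differentiable one_ne_zero) (sstar, u)).hasFDerivAt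
  have hsymm : ∀ v w, Φ v w = Φ w v := hf.contDiffAt.isSymmSndFDerivAt (by simp [minSmoothness_of_isRCLikeNormedField])
  -- derivatives of the composite gradient maps
  have hgF : HasFDerivAt (fun s' => kR n m (F (s', u)))
      ((kR n m).comp (Φ.comp (ContinuousLinearMap.inl ℝ (Euc n) (Euc m)))) sstar := by
    have := ((kR n m).hasFDerivAt.comp (sstar, u) hFd).comp sstar
      (f := fun s'' => (s'', u)) (hasFDerivAt_prodMk_left sstar u)
    exact this
  have hhF : HasFDerivAt (fun u' => kL n m (F (sstar, u')))
      ((kL n m).comp (Φ.comp (ContinuousLinearMap.inr ℝ (Euc n) (Euc m)))) u := by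
    have := ((kL n m).hasFDerivAt.comp (sstar, u) hFd).comp u
      (hasFDerivAt_prodMk_right sstar u)
    exact this
  have hGF : HasFDerivAt (fun s' => kL n m (F (s', u)))
      ((kL n m).comp (Φ.comp (ContinuousLinearMap.inl ℝ (Euc n) (Euc m)))) sstar := by
    have := ((kL n m).hasFDerivAt.comp (sstar, u) hFd).comp sstar
      (f := fun s'' => (s'', u)) (hasFDerivAt_prodMk_left sstar u)
    exact this
  set Dg := (kR n m).comp (Φ.comp (ContinuousLinearMap.inl ℝ (Euc n) (Euc m))) with hDg_def
  set Dh := (kL n m).comp (Φ.comp (ContinuousLinearMap.inr ℝ (Euc n) (Euc m))) with hDh_def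
  set DG := (kL n m).comp (Φ.comp (ContinuousLinearMap.inl ℝ (Euc n) (Euc m))) with hDG_def
  -- H = DG
  have hHDG : H = DG := by
    rw [hH, hG, hGF.fderiv]
  -- compute deriv s 0 = lam
  have hsd : HasDerivAt s (deriv s 0) 0 := hs.hasDerivAt
  have hchain : HasDerivAt (fun β => kL n m (F (s β, u))) (DG (deriv s 0)) 0 := by
    have hGF' : HasFDerivAt (fun s' => kL n m (F (s', u))) DG (s 0) := by rw [hs0]; exact hGF
    exact hGF'.comp_hasDerivAt 0 hsd
  have heq : (fun β => kL n m (F (s β, u))) =ᶠ[nhds (0:ℝ)] fun β => -(β • δ) := by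
    have hmem : Set.Ioo (-ε) ε ∈ nhds (0:ℝ) :=
      Ioo_mem_nhds (neg_lt_zero.mpr hε) hε
    filter_upwards [hmem] with β hβ
    have h0 := hnudge β hβ
    rw [congrFun hG (s β)] at h0
    exact eq_neg_of_add_eq_zero_right h0
  have hchain' : HasDerivAt (fun β => kL n m (F (s β, u))) (-δ) 0 := by
    have hrhs : HasDerivAt (fun β : ℝ => -(β • δ)) (-δ) 0 := by
      have h := ((hasDerivAt_id (0:ℝ)).smul_const δ).neg; rw [one_smul] at h; exact h
    exact hrhs.congr_of_eventuallyEq heq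
  have hDGds : DG (deriv s 0) = -δ := hchain.unique hchain'
  have hHlam : H lam = -δ := eq_neg_of_add_eq_zero_left hlam
  have hinvH : ∀ x, Hinv (H x) = x := by
    intro x
    have := congrFun (congrArg (fun (T : Euc n →L[ℝ] Euc n) => (T : Euc n → Euc n)) h1) x
    simpa using this
  have hds : deriv s 0 = lam := by
    have : Hinv (H (deriv s 0)) = Hinv (H lam) := by
      rw [hHDG] at hHlam ⊢; rw [hDGds, hHlam]
    rwa [hinvH, hinvH] at this
  -- compute the LHS derivative
  have hlhs : deriv (fun β => gradient (fun u' => Et (s β) θ u' ω) u) 0 = Dg lam := by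
    have hgF' : HasFDerivAt (fun s' => kR n m (F (s', u))) Dg (s 0) := by rw [hs0]; exact hgF
    have : HasDerivAt (fun β => kR n m (F (s β, u))) (Dg (deriv s 0)) 0 :=
      hgF'.comp_hasDerivAt 0 hsd
    have hfun : (fun β => gradient (fun u' => Et (s β) θ u' ω) u) =
        fun β => kR n m (F (s β, u)) := funext fun β => congrFun hg (s β)
    rw [hfun, this.deriv, hds]
  -- the adjoint identity
  have hfdh : fderiv ℝ (fun u' => gradient (fun s' => Et s' θ u' ω) sstar) u = Dh := by
    rw [hh]; exact hhF.fderiv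
  have hkey : Dg lam = ContinuousLinearMap.adjoint Dh lam := by
    apply ext_inner_right ℝ
    intro w
    rw [ContinuousLinearMap.adjoint_inner_left]
    have h1' : ⟪Dg lam, w⟫ = Φ (lam, 0) (0, w) := by
      rw [hDg_def]; simpa using inner_kR n m (Φ.comp (ContinuousLinearMap.inl ℝ (Euc n) (Euc m)) lam) w
    have h2' : ⟪lam, Dh w⟫ = Φ (0, w) (lam, 0) := by
      rw [real_inner_comm, hDh_def]
      simpa using inner_kL n m (Φ.comp (ContinuousLinearMap.inr ℝ (Euc n) (Euc m)) w) lam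
    rw [h1', h2', hsymm]
  -- part B reduction
  have hHinvδ : Hinv δ = -lam := by
    have : δ = -(H lam) := by rw [hHlam]; simp
    rw [this, map_neg, hinvH]
  constructor
  · rw [hlhs, hfdh, hkey]
  · rw [hlhs, hfdh, hkey, hHinvδ, map_neg, neg_neg]
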